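/- Let S, T ⊆ H be disjoint with S isotropic and T symplectic, and let P_T = Σ_{t∈T} z_t z_tᵀ be the coordinate projection onto ℝ^T. Define Ab(M) = (M − I)·P_T for M ∈ N_{S,T}(ℝ). Then Ab is a group homomorphism from N_{S,T}(ℝ) to the additive group of 2p×2p real matrices — i.e. Ab(M·M') = Ab(M) + Ab(M') for all M, M' ∈ N_{S,T}(ℝ) — and its kernel is exactly Z_S(ℝ): for M ∈ N_{S,T}(ℝ), Ab(M) = 0 if and only if M ∈ Z_S(ℝ). -/

import Mathlib

open Matrix

/-- Index type for `2p × 2p` matrices; negation of a signed index is `Sum.swap`. -/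
abbrev Idx (p : ℕ) := Fin p ⊕ Fin p

/-- The standard basis vector `z_h` of `ℝ^{2p}`. -/
def zvec (p : ℕ) (h : Idx p) : Idx p → ℝ := Pi.single h 1

/-- The standard symplectic matrix `J = [[0, I], [-I, 0]]`. -/
def Jmat (p : ℕ) : Matrix (Idx p) (Idx p) ℝ := Matrix.fromBlocks 0 1 (-1) 0

/-- The real symplectic group `Sp(2p;ℝ) = {M | MᵀJM = J}`. -/
def SpR (p : ℕ) : Set (Matrix (Idx p) (Idx p) ℝ) :=
  {M | Mᵀ * Jmat p * M = Jmat p}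

/-- `ℝ^A`: the span of the standard basis vectors `z_a`, `a ∈ A`. -/
def RSpan (p : ℕ) (A : Finset (Idx p)) : Submodule ℝ (Idx p → ℝ) :=
  Submodule.span ℝ {v | ∃ a ∈ A, v = zvec p a}

/-- `S ⊆ H` is isotropic if it contains no pair `{h, −h}`. -/
def IsIsotropic {p : ℕ} (S : Finset (Idx p)) : Prop := ∀ h ∈ S, Sum.swap h ∉ S

/-- `T ⊆ H` is symplectic if it is closed under negation. -/
def IsSymplecticSet {p : ℕ} (T : Finset (Idx p)) : Prop := ∀ h ∈ T, Sum.swap h ∈ T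

/-- The unipotent radical `N_{S,T}(ℝ)`. -/
def NR (p : ℕ) (S T : Finset (Idx p)) : Set (Matrix (Idx p) (Idx p) ℝ) :=
  {M | M ∈ SpR p ∧
    (∀ s ∈ S, M *ᵥ zvec p s = zvec p s) ∧
    (∀ h : Idx p, h ∉ S → h ∉ S.image Sum.swap → h ∉ T → M *ᵥ zvec p h = zvec p h) ∧
    (∀ t ∈ T, (M - 1) *ᵥ zvec p t ∈ RSpan p (S ∪ S.image Sum.swap))}

/-- `Z_S(ℝ) = {M ∈ Sp(2p;ℝ) : M z_h = z_h for h ∉ −S, (M−I)z_{−s} ∈ ℝ^S for s ∈ S}`. -/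
def ZS (p : ℕ) (S : Finset (Idx p)) : Set (Matrix (Idx p) (Idx p) ℝ) :=
  {M | M ∈ SpR p ∧
    (∀ h : Idx p, h ∉ S.image Sum.swap → M *ᵥ zvec p h = zvec p h) ∧
    (∀ s ∈ S, (M - 1) *ᵥ zvec p (Sum.swap s) ∈ RSpan p S)}

/-- The coordinate projection `P_T = Σ_{t∈T} z_t z_tᵀ` onto `ℝ^T`. -/
def projT (p : ℕ) (T : Finset (Idx p)) : Matrix (Idx p) (Idx p) ℝ :=
  ∑ t ∈ T, Matrix.single t t (1 : ℝ)

/-- `Ab(M) = (M − I)·P_T`. -/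
def AbMap (p : ℕ) (T : Finset (Idx p)) (M : Matrix (Idx p) (Idx p) ℝ) :
    Matrix (Idx p) (Idx p) ℝ :=
  (M - 1) * projT p T

/-! ### Auxiliary lemmas -/

lemma mulVec_zvec_apply {p : ℕ} (M : Matrix (Idx p) (Idx p) ℝ) (h i : Idx p) :
    (M *ᵥ zvec p h) i = M i h := by simp [zvec, mulVec_single]

lemma zvec_eq_one {p : ℕ} (h i : Idx p) :
    zvec p h i = (1 : Matrix (Idx p) (Idx p) ℝ) i h := by
  simp [zvec, Pi.single_apply, Matrix.one_apply]

lemma fix_iff {p : ℕ} (M : Matrix (Idx p) (Idx p) ℝ) (h : Idx p) :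
    M *ᵥ zvec p h = zvec p h ↔ ∀ i, M i h = (1 : Matrix (Idx p) (Idx p) ℝ) i h := by
  constructor
  · intro H i
    have h0 := congrFun H i
    rwa [mulVec_zvec_apply, zvec_eq_one] at h0
  · intro H; funext i; rw [mulVec_zvec_apply, zvec_eq_one, H]

lemma mem_image_swap {p : ℕ} (S : Finset (Idx p)) (k : Idx p) :
    k ∈ S.image Sum.swap ↔ Sum.swap k ∈ S := by
  simp only [Finset.mem_image]
  constructor
  · rintro ⟨a, ha, rfl⟩; simpa using ha
  · intro h; exact ⟨Sum.swap k, h, by simp⟩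

lemma projT_apply (p : ℕ) (T : Finset (Idx p)) (i j : Idx p) :
    projT p T i j = if i = j ∧ j ∈ T then 1 else 0 := by
  classical
  simp only [projT, Matrix.sum_apply, Matrix.single]
  by_cases h : i = j ∧ j ∈ T
  · obtain ⟨rfl, hj⟩ := h
    rw [Finset.sum_eq_single i]
    · simp [hj]
    · intro b _ hb; simp [of_apply]; exact hb
    · intro h'; exact absurd hj h'
  · simp only [if_neg h]
    apply Finset.sum_eq_zero
    intro t ht
    simp only [of_apply, ite_eq_right_iff, and_imp]
    rintro rfl rfl
    exact absurd ⟨rfl, ht⟩ h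

lemma AbMap_apply {p : ℕ} (T : Finset (Idx p)) (M : Matrix (Idx p) (Idx p) ℝ) (i j : Idx p) :
    AbMap p T M i j =
      if j ∈ T then M i j - (1 : Matrix (Idx p) (Idx p) ℝ) i j else 0 := by
  classical
  rw [AbMap, Matrix.mul_apply]
  by_cases hj : j ∈ T
  · rw [Finset.sum_eq_single j]
    · simp [projT_apply, hj, Matrix.sub_apply]
    · intro b _ hb; simp [projT_apply, hb]
    · intro h; exact absurd (Finset.mem_univ j) h
  · simp only [if_neg hj]
    apply Finset.sum_eq_zero; intro b _; simp [projT_apply, hj]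

lemma row_of_col (p : ℕ) (M : Matrix (Idx p) (Idx p) ℝ) (hM : M ∈ SpR p) (k : Idx p)
    (hcol : ∀ i, M i (Sum.swap k) = (1 : Matrix (Idx p) (Idx p) ℝ) i (Sum.swap k)) (j : Idx p) :
    M k j = (1 : Matrix (Idx p) (Idx p) ℝ) k j := by
  classical
  have hE : (Mᵀ * Jmat p * M) (Sum.swap k) j = Jmat p (Sum.swap k) j := by rw [hM]
  rw [Matrix.mul_apply] at hE
  have h1 : ∀ b, (Mᵀ * Jmat p) (Sum.swap k) b = Jmat p (Sum.swap k) b := by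
    intro b
    rw [Matrix.mul_apply]
    simp only [Matrix.transpose_apply, hcol, Matrix.one_apply]
    simp [Finset.sum_ite_eq]
  simp only [h1] at hE
  rcases k with k | k
  · simp only [Sum.swap_inl] at hE ⊢
    rw [Fintype.sum_sum_type] at hE
    simp only [Jmat, fromBlocks_apply₂₁, fromBlocks_apply₂₂, Matrix.neg_apply,
      Matrix.one_apply, Matrix.zero_apply, zero_mul, Finset.sum_const_zero, add_zero,
      neg_mul, ite_mul, one_mul] at hE
    rcases j with j | j <;>
      simp_all [Jmat, Matrix.one_apply, Finset.sum_ite_eq, neg_eq_iff_eq_neg]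
  · simp only [Sum.swap_inr] at hE ⊢
    rw [Fintype.sum_sum_type] at hE
    simp only [Jmat, fromBlocks_apply₁₁, fromBlocks_apply₁₂, Matrix.one_apply,
      Matrix.zero_apply, zero_mul, Finset.sum_const_zero, zero_add, ite_mul, one_mul] at hE
    rcases j with j | j <;>
      simp_all [Jmat, Matrix.one_apply, Finset.sum_ite_eq]

lemma RSpan_coord (p : ℕ) (A : Finset (Idx p)) (v : Idx p → ℝ) (hv : v ∈ RSpan p A)
    (k : Idx p) (hk : k ∉ A) : v k = 0 := by
  induction hv using Submodule.span_induction with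
  | mem x hx =>
      obtain ⟨a, ha, rfl⟩ := hx
      simp only [zvec, Pi.single_apply, ite_eq_right_iff]
      intro h; subst h; exact absurd ha hk
  | zero => rfl
  | add x y _ _ hx hy => simp [hx, hy]
  | smul c x _ hx => simp [hx]

lemma mem_RSpan (p : ℕ) (A : Finset (Idx p)) (v : Idx p → ℝ)
    (hv : ∀ k, k ∉ A → v k = 0) : v ∈ RSpan p A := by
  classical
  have hrep : v = ∑ a ∈ A, v a • zvec p a := by
    funext j
    rw [Finset.sum_apply]
    by_cases hj : j ∈ A
    · rw [Finset.sum_eq_single j]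
      · simp [zvec]
      · intro b _ hb; simp [zvec, Pi.single_apply, hb.symm]
      · intro h; exact absurd hj h
    · rw [hv j hj]
      apply (Finset.sum_eq_zero _).symm
      intro a ha
      have : j ≠ a := fun h => hj (h ▸ ha)
      simp [zvec, Pi.single_apply, this]
  rw [hrep]
  exact Submodule.sum_mem _ fun a ha =>
    Submodule.smul_mem _ _ (Submodule.subset_span ⟨a, ha, rfl⟩)

/-- `Ab` is a homomorphism from `N_{S,T}(ℝ)` to the additive group of
matrices, with kernel exactly `Z_S(ℝ)`. -/
theorem AbMap_hom_ker (p : ℕ) (hp : 1 ≤ p) (S T : Finset (Idx p))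
    (hdisj : Disjoint S T) (hS : IsIsotropic S) (hT : IsSymplecticSet T) :
    (∀ M ∈ NR p S T, ∀ M' ∈ NR p S T,
      AbMap p T (M * M') = AbMap p T M + AbMap p T M') ∧
    (∀ M ∈ NR p S T, (AbMap p T M = 0 ↔ M ∈ ZS p S)) := by
  classical
  -- For M ∈ NR and k ∉ S, the entry M k t for t ∈ T is trivial.
  have hone : ∀ M ∈ NR p S T, ∀ k, k ∉ S → ∀ t ∈ T,
      M k t = (1 : Matrix (Idx p) (Idx p) ℝ) k t := by
    intro M hM k hk t ht
    obtain ⟨hMs, hfixS, _hfixO, hspan⟩ := hM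
    by_cases hks : Sum.swap k ∈ S
    · exact row_of_col p M hMs k ((fix_iff _ _).1 (hfixS _ hks)) t
    · have hk2 : k ∉ S ∪ S.image Sum.swap := by
        simp only [Finset.mem_union, mem_image_swap]
        rintro (h | h)
        · exact hk h
        · exact hks h
      have h0 := RSpan_coord p _ _ (hspan t ht) k hk2
      rw [mulVec_zvec_apply, Matrix.sub_apply] at h0
      exact sub_eq_zero.mp h0
  constructor
  · intro M hM M' hM'
    ext i j
    rw [Matrix.add_apply, AbMap_apply, AbMap_apply, AbMap_apply]
    by_cases hj : j ∈ T
    · simp only [if_pos hj]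
      have hfixS : ∀ s ∈ S, ∀ i, M i s = (1 : Matrix (Idx p) (Idx p) ℝ) i s :=
        fun s hs => (fix_iff _ _).1 (hM.2.1 s hs)
      have hv : ∀ k, k ∉ S → M' k j = (1 : Matrix (Idx p) (Idx p) ℝ) k j :=
        fun k hk => hone M' hM' k hk j hj
      rw [Matrix.mul_apply]
      have step : ∀ k, M i k * M' k j =
          M i k * (1 : Matrix (Idx p) (Idx p) ℝ) k j
            + (1 : Matrix (Idx p) (Idx p) ℝ) i k * (M' - 1) k j := by
        intro k
        rw [Matrix.sub_apply]
        by_cases hk : k ∈ S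
        · rw [hfixS k hk i]; ring
        · rw [hv k hk]; ring
      rw [Finset.sum_congr rfl (fun k _ => step k), Finset.sum_add_distrib]
      have e1 : ∑ k, M i k * (1 : Matrix (Idx p) (Idx p) ℝ) k j = M i j := by
        rw [← Matrix.mul_apply, Matrix.mul_one]
      have e2 : ∑ k, (1 : Matrix (Idx p) (Idx p) ℝ) i k * (M' - 1) k j
          = M' i j - (1 : Matrix (Idx p) (Idx p) ℝ) i j := by
        rw [← Matrix.mul_apply, Matrix.one_mul, Matrix.sub_apply]
      rw [e1, e2]; ring
    · simp [hj]
  · intro M hM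
    obtain ⟨hMs, hfixS, hfixO, _hspan⟩ := hM
    constructor
    · intro hAb
      have hTfix : ∀ t ∈ T, ∀ i, M i t = (1 : Matrix (Idx p) (Idx p) ℝ) i t := by
        intro t ht i
        have h0 := congrFun (congrFun hAb i) t
        rw [AbMap_apply, if_pos ht, Matrix.zero_apply] at h0
        exact sub_eq_zero.mp h0
      have hallfix : ∀ h, h ∉ S.image Sum.swap →
          ∀ i, M i h = (1 : Matrix (Idx p) (Idx p) ℝ) i h := by
        intro h hh i
        by_cases h1 : h ∈ S
        · exact (fix_iff _ _).1 (hfixS h h1) i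
        · by_cases h2 : h ∈ T
          · exact hTfix h h2 i
          · exact (fix_iff _ _).1 (hfixO h h1 hh h2) i
      refine ⟨hMs, fun h hh => (fix_iff _ _).2 (hallfix h hh), ?_⟩
      intro s hs
      apply mem_RSpan
      intro k hk
      rw [mulVec_zvec_apply, Matrix.sub_apply]
      have hsw : Sum.swap k ∉ S.image Sum.swap := by
        rw [mem_image_swap]; simpa using hk
      have hrow := row_of_col p M hMs k (hallfix (Sum.swap k) hsw)
      rw [hrow (Sum.swap s)]; ring
    · intro hZ
      ext i j
      rw [AbMap_apply, Matrix.zero_apply]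
      by_cases hj : j ∈ T
      · rw [if_pos hj]
        have hjS : j ∉ S.image Sum.swap := by
          rw [mem_image_swap]
          intro hcon
          exact Finset.disjoint_left.mp hdisj hcon (hT j hj)
        rw [(fix_iff _ _).1 (hZ.2.1 j hjS) i]; ring
      · rw [if_neg hj]
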